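/- With ξ(u,v) := −(p × γ(u) × γ'(u)) (Lorentzian triple product) and κ_γ(u) := det(γ(u), γ'(u), γ''(u), p), the second partial derivatives of the cone parametrization Φ satisfy, for all (u,v) with sin(v) ≠ 0: ∂²Φ/∂v²(u,v) = −Φ(u,v); ∂²Φ/∂u∂v(u,v) = cot(v)·∂Φ/∂u(u,v); and ∂²Φ/∂u²(u,v) = sin²(v)·Φ(u,v) + sin(v)cos(v)·∂Φ/∂v(u,v) − κ_γ(u)·sin(v)·ξ(u,v). -/

import Mathlib

open Real

/-- The Minkowski scalar product on `ℝ⁴₁`: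
`⟨x,y⟩ = -x₁y₁ + x₂y₂ + x₃y₃ + x₄y₄`. -/
noncomputable def mdot (x y : Fin 4 → ℝ) : ℝ :=
  -(x 0 * y 0) + x 1 * y 1 + x 2 * y 2 + x 3 * y 3

private lemma det_fin_four' (A : Matrix (Fin 4) (Fin 4) ℝ) :
    A.det =
      A 0 0 * (A 1 1 * A 2 2 * A 3 3 - A 1 1 * A 2 3 * A 3 2 - A 1 2 * A 2 1 * A 3 3
        + A 1 2 * A 2 3 * A 3 1 + A 1 3 * A 2 1 * A 3 2 - A 1 3 * A 2 2 * A 3 1)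
      - A 0 1 * (A 1 0 * A 2 2 * A 3 3 - A 1 0 * A 2 3 * A 3 2 - A 1 2 * A 2 0 * A 3 3
        + A 1 2 * A 2 3 * A 3 0 + A 1 3 * A 2 0 * A 3 2 - A 1 3 * A 2 2 * A 3 0)
      + A 0 2 * (A 1 0 * A 2 1 * A 3 3 - A 1 0 * A 2 3 * A 3 1 - A 1 1 * A 2 0 * A 3 3
        + A 1 1 * A 2 3 * A 3 0 + A 1 3 * A 2 0 * A 3 1 - A 1 3 * A 2 1 * A 3 0)
      - A 0 3 * (A 1 0 * A 2 1 * A 3 2 - A 1 0 * A 2 2 * A 3 1 - A 1 1 * A 2 0 * A 3 2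
        + A 1 1 * A 2 2 * A 3 0 + A 1 2 * A 2 0 * A 3 1 - A 1 2 * A 2 1 * A 3 0) := by
  have h1 : (Fin.succAbove 2 2 : Fin 4) = 3 := rfl
  have h2 : (Fin.succAbove 1 2 : Fin 4) = 3 := rfl
  have h3 : (Fin.succ 2 : Fin 4) = 3 := rfl
  have h4 : (Fin.castSucc 2 : Fin 4) = 2 := rfl
  have h5 : (Fin.succAbove 3 2 : Fin 4) = 2 := rfl
  simp only [Matrix.det_succ_row_zero, Matrix.det_fin_three, Fin.sum_univ_succ,
    Matrix.submatrix_apply, Fin.succ_zero_eq_one, Fin.succ_one_eq_two, Fin.zero_succAbove,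
    Fin.succ_succAbove_zero, Fin.succ_succAbove_one, Fin.val_zero, Fin.val_succ,
    Finset.univ_unique, Finset.sum_singleton, Fin.default_eq_zero, Fin.val_eq_zero,
    h1, h2, h3, h4, h5]
  norm_num
  ring

private lemma det4v (a b c d : Fin 4 → ℝ) :
    (Matrix.of ![a, b, c, d]).det =
      a 0 * (b 1 * c 2 * d 3 - b 1 * c 3 * d 2 - b 2 * c 1 * d 3
        + b 2 * c 3 * d 1 + b 3 * c 1 * d 2 - b 3 * c 2 * d 1)
      - a 1 * (b 0 * c 2 * d 3 - b 0 * c 3 * d 2 - b 2 * c 0 * d 3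
        + b 2 * c 3 * d 0 + b 3 * c 0 * d 2 - b 3 * c 2 * d 0)
      + a 2 * (b 0 * c 1 * d 3 - b 0 * c 3 * d 1 - b 1 * c 0 * d 3
        + b 1 * c 3 * d 0 + b 3 * c 0 * d 1 - b 3 * c 1 * d 0)
      - a 3 * (b 0 * c 1 * d 2 - b 0 * c 2 * d 1 - b 1 * c 0 * d 2
        + b 1 * c 2 * d 0 + b 2 * c 0 * d 1 - b 2 * c 1 * d 0) := by
  rw [det_fin_four']
  simp only [Matrix.of_apply, Matrix.cons_val', Matrix.cons_val_zero, Matrix.cons_val_one,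
    Matrix.head_cons, Matrix.cons_val_two, Matrix.tail_cons, Matrix.cons_val_three,
    Matrix.empty_val', Matrix.cons_val_fin_one, Matrix.head_fin_const]

private lemma mdot_comm (x y : Fin 4 → ℝ) : mdot x y = mdot y x := by
  simp only [mdot]; ring

private lemma cross_sq (a b c N : Fin 4 → ℝ)
    (hN : ∀ x, mdot x N = (Matrix.of ![x, a, b, c]).det) :
    mdot N N = -(mdot a a * (mdot b b * mdot c c - mdot c b ^ 2)
      - mdot b a * (mdot b a * mdot c c - mdot c b * mdot c a)
      + mdot c a * (mdot b a * mdot c b - mdot b b * mdot c a)) := by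
  have h0 := hN ![1,0,0,0]
  have h1 := hN ![0,1,0,0]
  have h2 := hN ![0,0,1,0]
  have h3 := hN ![0,0,0,1]
  rw [det4v] at h0 h1 h2 h3
  simp only [mdot, Matrix.cons_val_zero, Matrix.cons_val_one, Matrix.head_cons,
    Matrix.cons_val_two, Matrix.tail_cons, Matrix.cons_val_three] at h0 h1 h2 h3
  have e0 : N 0 = -(a 1 * b 2 * c 3 - a 1 * b 3 * c 2 - a 2 * b 1 * c 3
      + a 2 * b 3 * c 1 + a 3 * b 1 * c 2 - a 3 * b 2 * c 1) := by linear_combination -h0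
  have e1 : N 1 = -(a 0 * b 2 * c 3 - a 0 * b 3 * c 2 - a 2 * b 0 * c 3
      + a 2 * b 3 * c 0 + a 3 * b 0 * c 2 - a 3 * b 2 * c 0) := by linear_combination h1
  have e2 : N 2 = (a 0 * b 1 * c 3 - a 0 * b 3 * c 1 - a 1 * b 0 * c 3
      + a 1 * b 3 * c 0 + a 3 * b 0 * c 1 - a 3 * b 1 * c 0) := by linear_combination h2
  have e3 : N 3 = -(a 0 * b 1 * c 2 - a 0 * b 2 * c 1 - a 1 * b 0 * c 2
      + a 1 * b 2 * c 0 + a 2 * b 0 * c 1 - a 2 * b 1 * c 0) := by linear_combination h3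
  simp only [mdot]
  rw [e0, e1, e2, e3]
  ring

private lemma hasDerivAt_mdot {f g : ℝ → Fin 4 → ℝ} {f' g' : Fin 4 → ℝ} {u : ℝ}
    (hf : HasDerivAt f f' u) (hg : HasDerivAt g g' u) :
    HasDerivAt (fun t => mdot (f t) (g t)) (mdot f' (g u) + mdot (f u) g') u := by
  have Hf : ∀ i, HasDerivAt (fun t => f t i) (f' i) u := fun i =>
    (ContinuousLinearMap.proj (R := ℝ) (φ := fun _ : Fin 4 => ℝ) i).hasFDerivAt.comp_hasDerivAt u hf
  have Hg : ∀ i, HasDerivAt (fun t => g t i) (g' i) u := fun i =>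
    (ContinuousLinearMap.proj (R := ℝ) (φ := fun _ : Fin 4 => ℝ) i).hasFDerivAt.comp_hasDerivAt u hg
  have H := ((((Hf 0).mul (Hg 0)).neg.add ((Hf 1).mul (Hg 1))).add
    ((Hf 2).mul (Hg 2))).add ((Hf 3).mul (Hg 3))
  have H' : HasDerivAt (fun t => mdot (f t) (g t))
      (-(f' 0 * g u 0 + f u 0 * g' 0) + (f' 1 * g u 1 + f u 1 * g' 1)
        + (f' 2 * g u 2 + f u 2 * g' 2) + (f' 3 * g u 3 + f u 3 * g' 3)) u := by
    exact H
  convert H' using 1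
  simp [mdot]; ring

/-- Second partial derivatives of the cone parametrization
`Φ(u,v) = cos v • p + sin v • γ(u)`. -/
theorem cone_second_derivatives
    (p : Fin 4 → ℝ) (hp : mdot p p = 1)
    (γ : ℝ → Fin 4 → ℝ) (hγsm : ContDiff ℝ (⊤ : ℕ∞) γ)
    (hγ1 : ∀ u, mdot (γ u) (γ u) = 1)
    (hγp : ∀ u, mdot (γ u) p = 0)
    (hγ' : ∀ u, mdot (deriv γ u) (deriv γ u) = -1)
    (Φ : ℝ → ℝ → Fin 4 → ℝ)
    (hΦ : ∀ u v, Φ u v = Real.cos v • p + Real.sin v • γ u)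
    (Nγ : ℝ → Fin 4 → ℝ)
    (hNγ : ∀ u x, mdot x (Nγ u) = (Matrix.of ![x, p, γ u, deriv γ u]).det)
    (ξ : ℝ → ℝ → Fin 4 → ℝ) (hξ : ∀ u v, ξ u v = -Nγ u)
    (κγ : ℝ → ℝ)
    (hκγ : ∀ u, κγ u = (Matrix.of ![γ u, deriv γ u, deriv (deriv γ) u, p]).det) :
    ∀ u v, Real.sin v ≠ 0 →
      deriv (fun v' => deriv (fun v'' => Φ u v'') v') v = -Φ u v ∧
      deriv (fun u' => deriv (fun v' => Φ u' v') v) u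
        = (Real.cos v / Real.sin v) • deriv (fun u' => Φ u' v) u ∧
      deriv (fun u' => deriv (fun u'' => Φ u'' v) u') u
        = Real.sin v ^ 2 • Φ u v
          + (Real.sin v * Real.cos v) • deriv (fun v' => Φ u v') v
          - (κγ u * Real.sin v) • ξ u v := by
  intro u v hv
  -- differentiability
  have hγd : Differentiable ℝ γ := hγsm.differentiable (by simp)
  have hd1 : ∀ t, HasDerivAt γ (deriv γ t) t := fun t => (hγd t).hasDerivAt
  have hγ'd : Differentiable ℝ (deriv γ) :=
    ((contDiff_infty_iff_deriv.mp hγsm).2).differentiable (by simp)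
  have hd2 : ∀ t, HasDerivAt (deriv γ) (deriv (deriv γ) t) t := fun t => (hγ'd t).hasDerivAt
  -- first-order relations
  have Rcb : ∀ t, mdot (deriv γ t) (γ t) = 0 := by
    intro t
    have hD := hasDerivAt_mdot (hd1 t) (hd1 t)
    have hC : HasDerivAt (fun s => mdot (γ s) (γ s)) 0 t := by
      have he : (fun s => mdot (γ s) (γ s)) = fun _ => (1 : ℝ) := funext hγ1
      rw [he]; exact hasDerivAt_const t 1
    have h := hD.unique hC
    have hs := mdot_comm (γ t) (deriv γ t)
    linarith
  have Rca : ∀ t, mdot (deriv γ t) p = 0 := by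
    intro t
    have hD := hasDerivAt_mdot (hd1 t) (hasDerivAt_const t p)
    have hC : HasDerivAt (fun s => mdot (γ s) p) 0 t := by
      have he : (fun s => mdot (γ s) p) = fun _ => (0 : ℝ) := funext hγp
      rw [he]; exact hasDerivAt_const t 0
    have h := hD.unique hC
    have h0 : mdot (γ t) (0 : Fin 4 → ℝ) = 0 := by simp [mdot]
    linarith
  -- second-order relations at u
  have Rdb : mdot (deriv (deriv γ) u) (γ u) = 1 := by
    have hD := hasDerivAt_mdot (hd2 u) (hd1 u)
    have hC : HasDerivAt (fun s => mdot (deriv γ s) (γ s)) 0 u := by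
      have he : (fun s => mdot (deriv γ s) (γ s)) = fun _ => (0 : ℝ) := funext Rcb
      rw [he]; exact hasDerivAt_const u 0
    have h := hD.unique hC
    have h2 := hγ' u
    linarith
  have Rda : mdot (deriv (deriv γ) u) p = 0 := by
    have hD := hasDerivAt_mdot (hd2 u) (hasDerivAt_const u p)
    have hC : HasDerivAt (fun s => mdot (deriv γ s) p) 0 u := by
      have he : (fun s => mdot (deriv γ s) p) = fun _ => (0 : ℝ) := funext Rca
      rw [he]; exact hasDerivAt_const u 0
    have h := hD.unique hC
    have h0 : mdot (deriv γ u) (0 : Fin 4 → ℝ) = 0 := by simp [mdot]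
    linarith
  have Rdc : mdot (deriv (deriv γ) u) (deriv γ u) = 0 := by
    have hD := hasDerivAt_mdot (hd2 u) (hd2 u)
    have hC : HasDerivAt (fun s => mdot (deriv γ s) (deriv γ s)) 0 u := by
      have he : (fun s => mdot (deriv γ s) (deriv γ s)) = fun _ => (-1 : ℝ) := funext hγ'
      rw [he]; exact hasDerivAt_const u (-1)
    have h := hD.unique hC
    have hs := mdot_comm (deriv (deriv γ) u) (deriv γ u)
    linarith
  -- notation
  set b : Fin 4 → ℝ := γ u with hb
  set c : Fin 4 → ℝ := deriv γ u with hc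
  set d : Fin 4 → ℝ := deriv (deriv γ) u with hd
  set N : Fin 4 → ℝ := Nγ u with hN
  set k : ℝ := κγ u with hk
  -- cross product relations
  have hNN : mdot N N = 1 := by
    rw [cross_sq p b c N (fun x => hNγ u x)]
    rw [hp, hγ1 u, hγ' u, Rcb u, Rca u, hγp u]
    norm_num
  have haN : mdot p N = 0 := by
    rw [hNγ u p]
    exact Matrix.det_zero_of_row_eq (M := Matrix.of ![p, p, b, c]) (i := 0) (j := 1)
      (by decide) rfl
  have hbN : mdot b N = 0 := by
    rw [hNγ u b]
    exact Matrix.det_zero_of_row_eq (M := Matrix.of ![b, p, b, c]) (i := 0) (j := 2)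
      (by decide) rfl
  have hcN : mdot c N = 0 := by
    rw [hNγ u c]
    exact Matrix.det_zero_of_row_eq (M := Matrix.of ![c, p, b, c]) (i := 0) (j := 3)
      (by decide) rfl
  have hdN : mdot d N = k := by
    rw [hNγ u d, hk, hκγ u, det4v, det4v]; ring
  have hdetA : (Matrix.of ![p, b, c, N]).det = -1 := by
    have h := hNγ u N
    have h2 : (Matrix.of ![p, b, c, N]).det = -mdot N N := by
      rw [h, det4v, det4v]; ring
    rw [h2, hNN]
  -- expanded relations
  have Xda := Rda; have Xba := hγp u; have Xdb := Rdb; have Xbb := hγ1 u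
  have Xdc := Rdc; have Xcb := Rcb u; have XaN := haN; have XbN := hbN
  have XcN := hcN; have XdN := hdN; have XNN := hNN
  simp only [mdot] at Xda Xba Xdb Xbb Xdc Xcb XaN XbN XcN XdN XNN
  -- solve for d
  set z : Fin 4 → ℝ := ![-(d 0 - b 0 - k * N 0), d 1 - b 1 - k * N 1,
    d 2 - b 2 - k * N 2, d 3 - b 3 - k * N 3] with hz_def
  have hAz : Matrix.mulVec (Matrix.of ![p, b, c, N]) z = 0 := by
    funext i
    fin_cases i
    · show Matrix.mulVec (Matrix.of ![p, b, c, N]) z 0 = 0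
      simp [Matrix.mulVec, dotProduct, Fin.sum_univ_four, hz_def, Matrix.vecHead, Matrix.vecTail]
      linear_combination Xda - Xba - k * XaN
    · show Matrix.mulVec (Matrix.of ![p, b, c, N]) z 1 = 0
      simp [Matrix.mulVec, dotProduct, Fin.sum_univ_four, hz_def, Matrix.vecHead, Matrix.vecTail]
      linear_combination Xdb - Xbb - k * XbN
    · show Matrix.mulVec (Matrix.of ![p, b, c, N]) z 2 = 0
      simp [Matrix.mulVec, dotProduct, Fin.sum_univ_four, hz_def, Matrix.vecHead, Matrix.vecTail]
      linear_combination Xdc - Xcb - k * XcN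
    · show Matrix.mulVec (Matrix.of ![p, b, c, N]) z 3 = 0
      simp [Matrix.mulVec, dotProduct, Fin.sum_univ_four, hz_def, Matrix.vecHead, Matrix.vecTail]
      linear_combination XdN - XbN - k * XNN
  have hzzero : z = 0 := by
    have hU : IsUnit (Matrix.of ![p, b, c, N]) := by
      rw [Matrix.isUnit_iff_isUnit_det, hdetA]
      exact isUnit_one.neg
    exact Matrix.mulVec_injective_iff_isUnit.mpr hU
      (by rw [hAz, Matrix.mulVec_zero])
  have z0 := congrFun hzzero 0
  have z1 := congrFun hzzero 1
  have z2 := congrFun hzzero 2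
  have z3 := congrFun hzzero 3
  simp only [hz_def, Matrix.cons_val_zero, Matrix.cons_val_one, Matrix.head_cons,
    Matrix.cons_val_two, Matrix.tail_cons, Matrix.cons_val_three, Pi.zero_apply] at z0 z1 z2 z3
  have hkey : d = b + k • N := by
    funext i
    fin_cases i
    · show d 0 = (b + k • N) 0
      simp only [Pi.add_apply, Pi.smul_apply, smul_eq_mul]; linarith
    · show d 1 = (b + k • N) 1
      simp only [Pi.add_apply, Pi.smul_apply, smul_eq_mul]; linarith
    · show d 2 = (b + k • N) 2
      simp only [Pi.add_apply, Pi.smul_apply, smul_eq_mul]; linarith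
    · show d 3 = (b + k • N) 3
      simp only [Pi.add_apply, Pi.smul_apply, smul_eq_mul]; linarith
  -- derivative computations for Φ
  have hdvfun : ∀ u' v', deriv (fun v'' => Φ u' v'') v'
      = (-Real.sin v') • p + Real.cos v' • γ u' := by
    intro u' v'
    have h : HasDerivAt (fun v'' => Φ u' v'') ((-Real.sin v') • p + Real.cos v' • γ u') v' := by
      simp only [hΦ]
      exact ((Real.hasDerivAt_cos v').smul_const p).add ((Real.hasDerivAt_sin v').smul_const (γ u'))
    exact h.deriv
  have hdufun : ∀ u', deriv (fun u'' => Φ u'' v) u' = Real.sin v • deriv γ u' := by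
    intro u'
    have h : HasDerivAt (fun u'' => Φ u'' v) (Real.sin v • deriv γ u') u' := by
      simp only [hΦ]
      have := (hasDerivAt_const u' (Real.cos v • p)).add ((hd1 u').const_smul (Real.sin v))
      rw [zero_add] at this; exact this
    exact h.deriv
  refine ⟨?_, ?_, ?_⟩
  · -- ∂²/∂v²
    simp only [hdvfun]
    have h2 : HasDerivAt (fun v' => (-Real.sin v') • p + Real.cos v' • γ u)
        ((-Real.cos v) • p + (-Real.sin v) • γ u) v :=
      ((Real.hasDerivAt_sin v).neg.smul_const p).add ((Real.hasDerivAt_cos v).smul_const (γ u))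
    rw [h2.deriv, hΦ]
    module
  · -- mixed
    simp only [hdvfun, hdufun]
    have hL : HasDerivAt (fun u' => (-Real.sin v) • p + Real.cos v • γ u')
        (Real.cos v • deriv γ u) u := by
      have := (hasDerivAt_const u ((-Real.sin v) • p)).add ((hd1 u).const_smul (Real.cos v))
      rw [zero_add] at this; exact this
    rw [hL.deriv, smul_smul, div_mul_cancel₀ _ hv]
  · -- ∂²/∂u²
    simp only [hdufun]
    have hL : HasDerivAt (fun u' => Real.sin v • deriv γ u') (Real.sin v • d) u :=
      (hd2 u).const_smul (Real.sin v)
    rw [hL.deriv, hΦ, hdvfun u v, hξ, hkey]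
    match_scalars
    · linear_combination (-Real.sin v) * (Real.sin_sq_add_cos_sq v)
    · ring
    · ring
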